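/- arXiv:2008.10035 — 2 statements merged into one kernel-verified Lean document; each statement's English description precedes it below -/
import Mathlib

section
/- Let n ≥ 5 and let Γ be the graph with vertex set {λ_{i,j} : 1 ≤ i < j ≤ n} and edges between λ_{i,j} and λ_{k,l} exactly when {i,j} ∩ {k,l} = ∅. Then for every vertex v, the induced subgraph on the complement of st(v) is connected. -/
namespace VTG

/-- Vertices `λ_{i,j}`, `1 ≤ i < j ≤ n`, indexed by pairs of `Fin n`. -/
abbrev Vtx (n : ℕ) := {p : Fin n × Fin n // p.1 < p.2}

/-- Two vertices `λ_{i,j}` and `λ_{k,l}` have disjoint index sets, i.e. `i,j,k,l` are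
four distinct integers. -/
abbrev DisjV {n : ℕ} (p q : Vtx n) : Prop :=
  p.1.1 ≠ q.1.1 ∧ p.1.1 ≠ q.1.2 ∧ p.1.2 ≠ q.1.1 ∧ p.1.2 ≠ q.1.2

open scoped commutatorElement in
/-- The right-angled Artin relations for `PVT_n`: the generators `λ_{i,j}` and `λ_{k,l}`
commute whenever `i, j, k, l` are four distinct integers. -/
def raagRels (n : ℕ) : Set (FreeGroup (Vtx n)) :=
  { w | ∃ p q : Vtx n, DisjV p q ∧ w = ⁅FreeGroup.of p, FreeGroup.of q⁆ }

/-- The graph of `PVT_n`: vertices are the generators `λ_{i,j}`, joined by an edge exactly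
when the index sets are disjoint (i.e. the generators commute). -/
def Γ (n : ℕ) : SimpleGraph (Vtx n) := SimpleGraph.fromRel (fun p q => DisjV p q)

def idx {n : ℕ} (p : Vtx n) : Finset (Fin n) := {p.1.1, p.1.2}

lemma fst_mem_idx {n} (p : Vtx n) : p.1.1 ∈ idx p := by simp [idx]
lemma snd_mem_idx {n} (p : Vtx n) : p.1.2 ∈ idx p := by simp [idx]

lemma disjV_iff {n} {p q : Vtx n} : DisjV p q ↔ Disjoint (idx p) (idx q) := by
  simp [DisjV, idx, Finset.disjoint_insert_left, Finset.disjoint_singleton_left,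
    Finset.mem_insert, Finset.mem_singleton, not_or]
  tauto

lemma adj_iff {n} {p q : Vtx n} : (Γ n).Adj p q ↔ p ≠ q ∧ Disjoint (idx p) (idx q) := by
  rw [Γ, SimpleGraph.fromRel_adj]
  constructor
  · rintro ⟨h1, h2 | h2⟩
    · exact ⟨h1, disjV_iff.1 h2⟩
    · exact ⟨h1, (disjV_iff.1 h2).symm⟩
  · rintro ⟨h1, h2⟩
    exact ⟨h1, Or.inl (disjV_iff.2 h2)⟩

def mk {n : ℕ} (i j : Fin n) (h : i ≠ j) : Vtx n :=
  if hij : i < j then ⟨(i, j), hij⟩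
  else ⟨(j, i), lt_of_le_of_ne (le_of_not_gt hij) h.symm⟩

lemma idx_mk {n} (i j : Fin n) (h : i ≠ j) : idx (mk i j h) = {i, j} := by
  unfold mk; split <;> simp [idx, Finset.pair_comm]

lemma mem_st_compl {n} {v w : Vtx n} :
    w ∈ {w : Vtx n | w ≠ v ∧ ¬ (Γ n).Adj v w} ↔ w ≠ v ∧ ¬ Disjoint (idx v) (idx w) := by
  simp only [Set.mem_setOf_eq, adj_iff]
  constructor
  · rintro ⟨h1, h2⟩; exact ⟨h1, fun hd => h2 ⟨Ne.symm h1, hd⟩⟩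
  · rintro ⟨h1, h2⟩; exact ⟨h1, fun h => h2 h.2⟩

lemma structure_lemma {n} (v : Vtx n) {w : Vtx n} (hw : w ≠ v)
    (hnd : ¬ Disjoint (idx v) (idx w)) :
    ∃ c, c ≠ v.1.1 ∧ c ≠ v.1.2 ∧ (idx w = {v.1.1, c} ∨ idx w = {v.1.2, c}) := by
  obtain ⟨s, hs1, hs2⟩ := Finset.not_disjoint_iff.1 hnd
  have hab : v.1.1 < v.1.2 := v.2
  have hw12 : w.1.1 < w.1.2 := w.2
  simp only [idx, Finset.mem_insert, Finset.mem_singleton] at hs1 hs2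
  have hveq : w.1.1 = v.1.1 → w.1.2 = v.1.2 → False := by
    intro h1 h2
    exact hw (Subtype.ext (Prod.ext h1 h2))
  rcases hs1 with rfl | rfl
  · rcases hs2 with h | h
    · refine ⟨w.1.2, (ne_of_lt (h ▸ hw12)).symm, ?_, Or.inl ?_⟩
      · intro hb; exact hveq h.symm hb
      · simp [idx, ← h]
    · refine ⟨w.1.1, ne_of_lt (h ▸ hw12), ne_of_lt (lt_trans (h ▸ hw12) hab), Or.inl ?_⟩
      simp [idx, ← h, Finset.pair_comm]
  · rcases hs2 with h | h
    · refine ⟨w.1.2, (ne_of_lt (lt_trans hab (h ▸ hw12))).symm,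
        (ne_of_lt (h ▸ hw12)).symm, Or.inr ?_⟩
      simp [idx, ← h]
    · refine ⟨w.1.1, ?_, ne_of_lt (h ▸ hw12), Or.inr ?_⟩
      · intro ha; exact hveq ha (h.symm)
      · simp [idx, ← h, Finset.pair_comm]

lemma card_four {n} (a b c d : Fin n) : ({a, b, c, d} : Finset (Fin n)).card ≤ 4 := by
  calc ({a, b, c, d} : Finset (Fin n)).card
      ≤ ({b, c, d} : Finset (Fin n)).card + 1 := Finset.card_insert_le _ _
    _ ≤ (({c, d} : Finset (Fin n)).card + 1) + 1 := by
        have := Finset.card_insert_le b ({c, d} : Finset (Fin n)); omega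
    _ ≤ ((({d} : Finset (Fin n)).card + 1) + 1) + 1 := by
        have := Finset.card_insert_le c ({d} : Finset (Fin n)); omega
    _ ≤ 4 := by simp

lemma exists_not_mem {n : ℕ} (hn : 5 ≤ n) (s : Finset (Fin n)) (h : s.card ≤ 4) :
    ∃ x, x ∉ s := by
  by_contra hc
  push_neg at hc
  have h2 : (Finset.univ : Finset (Fin n)) ⊆ s := fun x _ => hc x
  have := Finset.card_le_card h2
  simp [Finset.card_univ] at this
  omega

lemma dpair {n} {x1 x2 y1 y2 : Fin n} (h1 : x1 ≠ y1) (h2 : x1 ≠ y2) (h3 : x2 ≠ y1)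
    (h4 : x2 ≠ y2) : Disjoint ({x1, x2} : Finset (Fin n)) {y1, y2} := by
  rw [Finset.disjoint_left]
  intro z hz hz2
  simp only [Finset.mem_insert, Finset.mem_singleton] at hz hz2
  rcases hz with rfl | rfl <;> tauto

/-- For `n ≥ 5`, for every vertex `v` of the graph `Γ` of `PVT_n`, the induced subgraph
on the complement of the star `st(v)` is connected. -/
theorem st_complement_connected (n : ℕ) (hn : 5 ≤ n) (v : Vtx n) :
    ((Γ n).induce {w : Vtx n | w ≠ v ∧ ¬ (Γ n).Adj v w}).Connected := by
  set S := {w : Vtx n | w ≠ v ∧ ¬ (Γ n).Adj v w} with hS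
  have hab : v.1.1 < v.1.2 := v.2
  set a := v.1.1 with ha
  set b := v.1.2 with hb
  have hidxv : idx v = {a, b} := rfl
  -- membership of mk e x in S
  have hmkS : ∀ (e x : Fin n) (he : e = a ∨ e = b) (hxa : x ≠ a) (hxb : x ≠ b)
      (hex : e ≠ x), mk e x hex ∈ S := by
    intro e x he hxa hxb hex
    rw [hS, mem_st_compl]
    constructor
    · intro hmv
      have h1 : idx (mk e x hex) = idx v := by rw [hmv]
      rw [idx_mk, hidxv] at h1
      have hx : x ∈ ({a, b} : Finset (Fin n)) := by rw [← h1]; simp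
      simp only [Finset.mem_insert, Finset.mem_singleton] at hx
      tauto
    · rw [Finset.not_disjoint_iff]
      refine ⟨e, ?_, ?_⟩
      · rw [hidxv]; rcases he with rfl | rfl <;> simp
      · rw [idx_mk]; simp
  -- one step of reachability
  have step : ∀ (p q : ↥S), Disjoint (idx p.1) (idx q.1) →
      ((Γ n).induce S).Reachable p q := by
    intro p q h
    have hne : p.1 ≠ q.1 := by
      intro he
      rw [he] at h
      exact absurd (fst_mem_idx q.1) (Finset.disjoint_left.1 h (fst_mem_idx q.1))
    exact SimpleGraph.Adj.reachable (by exact adj_iff.2 ⟨hne, h⟩)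
  -- same-class reachability: both p and q contain e ∈ {a,b}, f is the other one
  have same : ∀ (e f c d : Fin n), e ≠ f → (e = a ∨ e = b) → (f = a ∨ f = b) →
      ∀ (p q : ↥S), c ≠ a → c ≠ b → d ≠ a → d ≠ b →
      idx p.1 = {e, c} → idx q.1 = {e, d} → ((Γ n).induce S).Reachable p q := by
    intro e f c d hef he hf p q hca hcb hda hdb hp hq
    obtain ⟨x, hx⟩ := exists_not_mem hn {a, b, c, d} (card_four a b c d)
    simp only [Finset.mem_insert, Finset.mem_singleton, not_or] at hx
    obtain ⟨hxa, hxb, hxc, hxd⟩ := hx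
    have hfx : f ≠ x := by rcases hf with rfl | rfl; exacts [Ne.symm hxa, Ne.symm hxb]
    have hea : e ≠ x := by rcases he with rfl | rfl; exacts [Ne.symm hxa, Ne.symm hxb]
    have hcf : c ≠ f := by rcases hf with rfl | rfl; exacts [hca, hcb]
    have hdf : d ≠ f := by rcases hf with rfl | rfl; exacts [hda, hdb]
    set m : ↥S := ⟨mk f x hfx, hmkS f x hf hxa hxb hfx⟩ with hm
    have h1 : ((Γ n).induce S).Reachable p m := by
      apply step
      rw [hp, hm, idx_mk]
      exact dpair hef hea hcf (Ne.symm hxc)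
    have h2 : ((Γ n).induce S).Reachable m q := by
      apply step
      rw [hq, hm, idx_mk]
      exact dpair (Ne.symm hef) (Ne.symm hdf) (Ne.symm hea) hxd
    exact h1.trans h2
  -- cross-class reachability: p contains e, q contains f, e ≠ f
  have cross : ∀ (e f c d : Fin n), e ≠ f → (e = a ∨ e = b) → (f = a ∨ f = b) →
      ∀ (p q : ↥S), c ≠ a → c ≠ b → d ≠ a → d ≠ b →
      idx p.1 = {e, c} → idx q.1 = {f, d} → ((Γ n).induce S).Reachable p q := by
    intro e f c d hef he hf p q hca hcb hda hdb hp hq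
    have hce : c ≠ e := by rcases he with rfl | rfl; exacts [hca, hcb]
    have hcf : c ≠ f := by rcases hf with rfl | rfl; exacts [hca, hcb]
    have hde : d ≠ e := by rcases he with rfl | rfl; exacts [hda, hdb]
    have hdf : d ≠ f := by rcases hf with rfl | rfl; exacts [hda, hdb]
    by_cases hcd : c = d
    · subst hcd
      obtain ⟨x, hx⟩ := exists_not_mem hn {a, b, c, c} (card_four a b c c)
      simp only [Finset.mem_insert, Finset.mem_singleton, not_or] at hx
      obtain ⟨hxa, hxb, hxc, -⟩ := hx
      obtain ⟨y, hy⟩ := exists_not_mem hn {a, b, c, x} (card_four a b c x)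
      simp only [Finset.mem_insert, Finset.mem_singleton, not_or] at hy
      obtain ⟨hya, hyb, hyc, hyx⟩ := hy
      have hfx : f ≠ x := by rcases hf with rfl | rfl; exacts [Ne.symm hxa, Ne.symm hxb]
      have hey : e ≠ y := by rcases he with rfl | rfl; exacts [Ne.symm hya, Ne.symm hyb]
      have hex : e ≠ x := by rcases he with rfl | rfl; exacts [Ne.symm hxa, Ne.symm hxb]
      have hfy : f ≠ y := by rcases hf with rfl | rfl; exacts [Ne.symm hya, Ne.symm hyb]
      set m1 : ↥S := ⟨mk f x hfx, hmkS f x hf hxa hxb hfx⟩ with hm1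
      set m2 : ↥S := ⟨mk e y hey, hmkS e y he hya hyb hey⟩ with hm2
      have h1 : ((Γ n).induce S).Reachable p m1 := by
        apply step
        rw [hp, hm1, idx_mk]
        exact dpair hef hex hcf (Ne.symm hxc)
      have h2 : ((Γ n).induce S).Reachable m1 m2 := by
        apply step
        rw [hm1, hm2, idx_mk, idx_mk]
        exact dpair hef.symm hfy hex.symm (Ne.symm hyx)
      have h3 : ((Γ n).induce S).Reachable m2 q := by
        apply step
        rw [hq, hm2, idx_mk]
        exact dpair hef (Ne.symm hce) (Ne.symm hfy) hyc
      exact (h1.trans h2).trans h3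
    · apply step
      rw [hp, hq]
      exact dpair hef (Ne.symm hde) hcf hcd
  rw [SimpleGraph.connected_iff]
  constructor
  · intro p q
    have hp := mem_st_compl.1 p.2
    have hq := mem_st_compl.1 q.2
    obtain ⟨c, hca, hcb, hc⟩ := structure_lemma v hp.1 hp.2
    obtain ⟨d, hda, hdb, hd⟩ := structure_lemma v hq.1 hq.2
    have hne : a ≠ b := ne_of_lt hab
    rcases hc with hc | hc <;> rcases hd with hd | hd
    · exact same a b c d hne (Or.inl rfl) (Or.inr rfl) p q hca hcb hda hdb hc hd
    · exact cross a b c d hne (Or.inl rfl) (Or.inr rfl) p q hca hcb hda hdb hc hd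
    · exact cross b a c d hne.symm (Or.inr rfl) (Or.inl rfl) p q hca hcb hda hdb hc hd
    · exact same b a c d hne.symm (Or.inr rfl) (Or.inl rfl) p q hca hcb hda hdb hc hd
  · obtain ⟨x, hx⟩ := exists_not_mem hn {a, b, a, b} (card_four a b a b)
    simp only [Finset.mem_insert, Finset.mem_singleton, not_or] at hx
    obtain ⟨hxa, hxb, -, -⟩ := hx
    exact ⟨⟨mk a x (Ne.symm hxa), hmkS a x (Or.inl rfl) hxa hxb (Ne.symm hxa)⟩⟩

end VTG
end

section
/- Let n ≥ 5 and let Γ be the graph with vertex set {λ_{i,j} : 1 ≤ i < j ≤ n} and edges between λ_{i,j} and λ_{k,l} exactly when {i,j} ∩ {k,l} = ∅. Then no vertex dominates another: for distinct vertices v, w, the link lk(v) is not contained in st(w). -/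
namespace VTG

/-- For `n ≥ 5`, no vertex of the graph `Γ` of `PVT_n` dominates another: for distinct
vertices `v, w`, the link of `v` is not contained in the star of `w`. -/
theorem no_domination (n : ℕ) (hn : 5 ≤ n) (v w : Vtx n) (hvw : v ≠ w) :
    ¬ (∀ u : Vtx n, (Γ n).Adj v u → (u = w ∨ (Γ n).Adj w u)) := by
  intro H
  obtain ⟨⟨a, b⟩, hab⟩ := v
  obtain ⟨⟨c, d⟩, hcd⟩ := w
  have hne : (a, b) ≠ (c, d) := fun h => hvw (Subtype.ext h)
  -- find c0 ∈ {c,d} with c0 ∉ {a,b}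
  have hc0 : ∃ x : Fin n, (x = c ∨ x = d) ∧ x ≠ a ∧ x ≠ b := by
    by_cases h1 : c = a
    · subst h1
      refine ⟨d, Or.inr rfl, fun h => absurd h (ne_of_gt hcd), fun h => ?_⟩
      exact hne (by rw [h])
    · by_cases h2 : c = b
      · subst h2
        exact ⟨d, Or.inr rfl, fun h => absurd (h ▸ hcd) (by simp [not_lt.2 (le_of_lt hab)]),
          fun h => absurd (h ▸ hcd) (lt_irrefl _)⟩
      · exact ⟨c, Or.inl rfl, h1, h2⟩
  obtain ⟨c0, hc0cd, hc0a, hc0b⟩ := hc0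
  -- find e not in {a,b,c,d}
  have he : ∃ e : Fin n, e ≠ a ∧ e ≠ b ∧ e ≠ c ∧ e ≠ d := by
    have hcard : ({a, b, c, d} : Finset (Fin n)).card ≤ 4 := by
      refine le_trans (Finset.card_insert_le _ _) ?_
      refine Nat.succ_le_succ (le_trans (Finset.card_insert_le _ _) ?_)
      refine Nat.succ_le_succ (le_trans (Finset.card_insert_le _ _) ?_)
      simp
    have hpos : 0 < ({a, b, c, d} : Finset (Fin n))ᶜ.card := by
      rw [Finset.card_compl]
      have : Fintype.card (Fin n) = n := Fintype.card_fin n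
      omega
    obtain ⟨e, he⟩ := Finset.card_pos.mp hpos
    rw [Finset.mem_compl] at he
    simp only [Finset.mem_insert, Finset.mem_singleton, not_or] at he
    exact ⟨e, he.1, he.2.1, he.2.2.1, he.2.2.2⟩
  obtain ⟨e, hea, heb, hec, hed⟩ := he
  have hc0e : c0 ≠ e := by
    rcases hc0cd with h | h
    · exact h ▸ fun h' => hec h'.symm
    · exact h ▸ fun h' => hed h'.symm
  -- build u with components c0 and e
  have hu : ∃ u : Vtx n,
      (u.1.1 ≠ a ∧ u.1.1 ≠ b ∧ u.1.2 ≠ a ∧ u.1.2 ≠ b) ∧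
      ((u.1.1 ≠ c ∧ u.1.1 ≠ d) ∨ (u.1.2 ≠ c ∧ u.1.2 ≠ d)) ∧
      (u.1.1 = c ∨ u.1.1 = d ∨ u.1.2 = c ∨ u.1.2 = d) := by
    rcases lt_or_gt_of_ne hc0e with h | h
    · exact ⟨⟨(c0, e), h⟩, ⟨hc0a, hc0b, hea, heb⟩, Or.inr ⟨hec, hed⟩,
        by rcases hc0cd with h' | h' <;> simp [h']⟩
    · exact ⟨⟨(e, c0), h⟩, ⟨hea, heb, hc0a, hc0b⟩, Or.inl ⟨hec, hed⟩,
        by rcases hc0cd with h' | h' <;> simp [h']⟩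
  obtain ⟨u, ⟨h1, h2, h3, h4⟩, hnotw, hhit⟩ := hu
  have hadj : (Γ n).Adj ⟨(a, b), hab⟩ u := by
    rw [Γ, SimpleGraph.fromRel_adj]
    refine ⟨fun h => h1 (congrArg (fun x => x.1.1) h).symm, Or.inl ?_⟩
    exact ⟨fun h => h1 h.symm, fun h => h3 h.symm, fun h => h2 h.symm, fun h => h4 h.symm⟩
  rcases H u hadj with h | h
  · subst h
    rcases hnotw with ⟨hx, _⟩ | ⟨_, hy⟩
    · exact hx rfl
    · exact hy rfl
  · rw [Γ, SimpleGraph.fromRel_adj] at h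
    obtain ⟨-, hd⟩ := h
    rcases hd with ⟨d1, d2, d3, d4⟩ | ⟨d1, d2, d3, d4⟩
    · rcases hhit with h | h | h | h
      · exact d1 h.symm
      · exact d3 h.symm
      · exact d2 h.symm
      · exact d4 h.symm
    · rcases hhit with h | h | h | h
      · exact d1 h
      · exact d2 h
      · exact d3 h
      · exact d4 h

end VTG
end
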